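/- Let Γ = (V, E) be a finite connected graph with boundary regions A, B and let σ_min ⊆ E be a minimum A–B edge cut of size m. For any labeling {π_v}_{v ∈ V} of the vertices by elements of S_N with π_v = id for v adjacent to A and π_v = F (a fixed N-cycle) for v adjacent to B, the total 'face number' Ω̃({π_v}) := ∑_{(u,v) ∈ E} χ(π_u⁻¹ π_v) satisfies Ω̃ ≤ N|E| − m(N − 1). -/

import Mathlib

set_option linter.unusedSectionVars false
set_option maxHeartbeats 1000000

def numCycles {N : ℕ} (π : Equiv.Perm (Fin N)) : ℕ :=
  N - π.cycleType.sum + Multiset.card π.cycleType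

/-- The face count `χ(π_u⁻¹ π_v)` of an unordered edge `{u, v}`. -/
def numCyclesLift {N : ℕ} {V : Type*} (π : V → Equiv.Perm (Fin N)) : Sym2 V → ℕ :=
  Sym2.lift ⟨fun u v => numCycles ((π u)⁻¹ * π v), fun u v => by
    have h : (π v)⁻¹ * π u = ((π u)⁻¹ * π v)⁻¹ := by group
    show numCycles ((π u)⁻¹ * π v) = numCycles ((π v)⁻¹ * π u)
    rw [numCycles, numCycles, h, Equiv.Perm.cycleType_inv]⟩

/-- `σ` is an `A`–`B` edge cut: a set of edges of `G` such that every walk from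
`A` to `B` uses an edge of `σ`. -/
def IsEdgeCut {V : Type*} (G : SimpleGraph V) (A B : Set V)
    (σ : Finset (Sym2 V)) : Prop :=
  ↑σ ⊆ G.edgeSet ∧ ∀ a ∈ A, ∀ b ∈ B, ∀ w : G.Walk a b, ∃ e ∈ w.edges, e ∈ σ

/-- `σ` is a minimum `A`–`B` edge cut. -/
def IsMinEdgeCut {V : Type*} (G : SimpleGraph V) (A B : Set V)
    (σ : Finset (Sym2 V)) : Prop :=
  IsEdgeCut G A B σ ∧ ∀ σ' : Finset (Sym2 V), IsEdgeCut G A B σ' → σ.card ≤ σ'.card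

open scoped Classical in
/-- The labeling assigning `id` to vertices reachable from `A` after deleting the
cut edges `σ`, and `F` to all other vertices. -/
noncomputable def cutLabel {V : Type*} {N : ℕ} (G : SimpleGraph V)
    (σ : Finset (Sym2 V)) (A : Set V) (F : Equiv.Perm (Fin N)) :
    V → Equiv.Perm (Fin N) :=
  fun v => if ∃ a ∈ A, (G.deleteEdges ↑σ).Reachable a v then 1 else F

namespace FaceAux

variable {α : Type*} [Fintype α] [DecidableEq α]

/-- product of swaps indexed by a list of pairs -/
def mulSwapProd (l : List (α × α)) : Equiv.Perm α :=
  (l.map fun p => Equiv.swap p.1 p.2).prod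

def SwapRep (g : Equiv.Perm α) (k : ℕ) : Prop :=
  ∃ l : List (α × α), mulSwapProd l = g ∧ l.length = k

lemma map_zip_swap : ∀ (l1 l2 : List α),
    ((l1.zip l2).map fun p => Equiv.swap p.1 p.2) = List.zipWith Equiv.swap l1 l2
  | [], _ => by simp
  | _ :: _, [] => by simp
  | a :: l1, b :: l2 => by simp [map_zip_swap l1 l2]

lemma card_le_sum_of_one_le {m : Multiset ℕ} (h : ∀ x ∈ m, 1 ≤ x) :
    Multiset.card m ≤ m.sum := by
  induction m using Multiset.induction_on with
  | empty => simp
  | cons a s ih =>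
    simp only [Multiset.card_cons, Multiset.sum_cons]
    have := h a (Multiset.mem_cons_self a s)
    have := ih (fun x hx => h x (Multiset.mem_cons_of_mem hx))
    omega

lemma card_cycleType_le_sum (g : Equiv.Perm α) :
    Multiset.card g.cycleType ≤ g.cycleType.sum :=
  card_le_sum_of_one_le fun _ hx =>
    le_trans one_le_two (Equiv.Perm.two_le_of_mem_cycleType hx)

lemma sum_cycleType_le (g : Equiv.Perm α) : g.cycleType.sum ≤ Fintype.card α := by
  rw [Equiv.Perm.sum_cycleType]; exact Finset.card_le_univ _

lemma exists_swapRep (g : Equiv.Perm α) :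
    ∃ l : List (α × α), mulSwapProd l = g ∧
      l.length + Multiset.card g.cycleType = g.cycleType.sum := by
  induction g using Equiv.Perm.cycle_induction_on with
  | base_one => exact ⟨[], by simp [mulSwapProd], by simp⟩
  | base_cycles σ hσ =>
    obtain ⟨x, hx, -⟩ := id hσ
    refine ⟨(σ.toList x).zip (σ.toList x).tail, ?_, ?_⟩
    · rw [mulSwapProd, map_zip_swap]
      have : (σ.toList x).formPerm = σ := by
        rw [Equiv.Perm.formPerm_toList, hσ.cycleOf_eq hx]
      exact this
    · have hlen : (σ.toList x).length = σ.support.card := by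
        rw [Equiv.Perm.length_toList, hσ.cycleOf_eq hx]
      have hpos : 0 < σ.support.card := Finset.card_pos.mpr ⟨x, Equiv.Perm.mem_support.mpr hx⟩
      rw [hσ.cycleType]
      simp only [List.length_zip, List.length_tail, hlen, Multiset.coe_singleton,
        Multiset.card_singleton, Multiset.sum_singleton]
      omega
  | induction_disjoint σ τ hd _ hσ hτ =>
    obtain ⟨l1, hl1, hc1⟩ := hσ
    obtain ⟨l2, hl2, hc2⟩ := hτ
    refine ⟨l1 ++ l2, ?_, ?_⟩
    · rw [mulSwapProd, List.map_append, List.prod_append, ← mulSwapProd, ← mulSwapProd, hl1, hl2]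
    · rw [Equiv.Perm.Disjoint.cycleType_mul hd]
      simp only [List.length_append, Multiset.card_add, Multiset.sum_add]
      omega

noncomputable def swapLen (g : Equiv.Perm α) : ℕ := sInf {k | SwapRep g k}

lemma swapRep_swapLen (g : Equiv.Perm α) : SwapRep g (swapLen g) := by
  obtain ⟨l, hl, hc⟩ := exists_swapRep g
  exact Nat.sInf_mem (⟨l.length, l, hl, rfl⟩ : {k | SwapRep g k}.Nonempty)

lemma swapLen_le {g : Equiv.Perm α} {k : ℕ} (h : SwapRep g k) : swapLen g ≤ k :=
  Nat.sInf_le h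

lemma swapLen_le_c (g : Equiv.Perm α) :
    swapLen g + Multiset.card g.cycleType ≤ g.cycleType.sum := by
  obtain ⟨l, hl, hc⟩ := exists_swapRep g
  have := swapLen_le ⟨l, hl, rfl⟩
  omega

lemma swapRep_mul {g h : Equiv.Perm α} {j k : ℕ} (hg : SwapRep g j) (hh : SwapRep h k) :
    SwapRep (g * h) (j + k) := by
  obtain ⟨l1, hl1, hc1⟩ := hg
  obtain ⟨l2, hl2, hc2⟩ := hh
  exact ⟨l1 ++ l2, by
    rw [mulSwapProd, List.map_append, List.prod_append, ← mulSwapProd, ← mulSwapProd, hl1, hl2],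
    by simp [hc1, hc2]⟩

lemma swapRep_inv {g : Equiv.Perm α} {k : ℕ} (hg : SwapRep g k) : SwapRep g⁻¹ k := by
  obtain ⟨l, hl, hc⟩ := hg
  refine ⟨l.reverse, ?_, by simpa using hc⟩
  have hmap : ((l.map fun p => Equiv.swap p.1 p.2).map fun x => x⁻¹)
      = l.map fun p => Equiv.swap p.1 p.2 := by
    rw [List.map_map]
    apply List.map_congr_left
    intro p _
    simp [Function.comp, Equiv.swap_inv]
  rw [mulSwapProd, List.map_reverse, List.prod_reverse_noncomm, hmap, ← mulSwapProd, hl]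

lemma swapLen_one : swapLen (1 : Equiv.Perm α) = 0 :=
  Nat.le_zero.mp (swapLen_le ⟨[], by simp [mulSwapProd], rfl⟩)

lemma swapLen_triangle (g h : Equiv.Perm α) :
    swapLen h ≤ swapLen g + swapLen (g⁻¹ * h) := by
  have := swapRep_mul (swapRep_swapLen g) (swapRep_swapLen (g⁻¹ * h))
  rw [mul_inv_cancel_left] at this
  exact swapLen_le this

lemma swapLen_inv (g : Equiv.Perm α) : swapLen g⁻¹ ≤ swapLen g :=
  swapLen_le (swapRep_inv (swapRep_swapLen g))

/-- merge the classes of `a` and `b` in a setoid -/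
def mergeSetoid (s : Setoid α) (a b : α) : Setoid α where
  r x y := s.r x y ∨ ((s.r x a ∨ s.r x b) ∧ (s.r y a ∨ s.r y b))
  iseqv := by
    constructor
    · exact fun x => Or.inl (s.refl x)
    · rintro x y (h | ⟨h1, h2⟩)
      · exact Or.inl (s.symm h)
      · exact Or.inr ⟨h2, h1⟩
    · rintro x y z (h | ⟨h1, h2⟩) (h' | ⟨h1', h2'⟩)
      · exact Or.inl (s.trans h h')
      · exact Or.inr ⟨h1'.imp (s.trans h) (s.trans h), h2'⟩
      · exact Or.inr ⟨h1, h2.imp (s.trans (s.symm h')) (s.trans (s.symm h'))⟩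
      · exact Or.inr ⟨h1, h2'⟩

lemma card_quotient_merge (s : Setoid α) (a b : α) :
    Nat.card (Quotient s) ≤ Nat.card (Quotient (mergeSetoid s a b)) + 1 := by
  classical
  let j : Quotient s → Option (Quotient (mergeSetoid s a b)) := fun c =>
    if c = Quotient.mk s a then none
    else some (Quotient.lift (fun x => Quotient.mk (mergeSetoid s a b) x)
      (fun x y h => Quotient.sound (Or.inl h)) c)
  have hinj : Function.Injective j := by
    intro c1 c2 h
    induction c1 using Quotient.ind with | _ x =>
    induction c2 using Quotient.ind with | _ y =>
    simp only [j] at h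
    by_cases h1 : Quotient.mk s x = Quotient.mk s a <;>
      by_cases h2 : Quotient.mk s y = Quotient.mk s a
    · rw [h1, h2]
    · simp [h1, h2] at h
    · simp [h1, h2] at h
    · rw [if_neg h1, if_neg h2] at h
      simp only [Quotient.lift_mk, Option.some.injEq] at h
      have hxa : ¬ s.r x a := fun hr => h1 (Quotient.sound hr)
      have hya : ¬ s.r y a := fun hr => h2 (Quotient.sound hr)
      have hm : (mergeSetoid s a b).r x y := Quotient.exact h
      rcases hm with hm | ⟨hx, hy⟩
      · exact Quotient.sound hm
      · rcases hx with hx | hx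
        · exact absurd hx hxa
        · rcases hy with hy | hy
          · exact absurd hy hya
          · exact Quotient.sound (s.trans hx (s.symm hy))
  calc Nat.card (Quotient s)
      ≤ Nat.card (Option (Quotient (mergeSetoid s a b))) :=
        Nat.card_le_card_of_injective j hinj
    _ = Nat.card (Quotient (mergeSetoid s a b)) + 1 := Finite.card_option

/-- the setoid generated by a list of pairs -/
def pairsSetoid : List (α × α) → Setoid α
  | [] => ⟨Eq, eq_equivalence⟩
  | p :: l => mergeSetoid (pairsSetoid l) p.1 p.2

lemma card_quotient_pairsSetoid (l : List (α × α)) :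
    Fintype.card α ≤ Nat.card (Quotient (pairsSetoid l)) + l.length := by
  induction l with
  | nil =>
    have hbij : Function.Bijective (Quotient.mk (pairsSetoid ([] : List (α × α)))) := by
      constructor
      · intro x y h
        exact Quotient.exact h
      · exact Quotient.exists_rep
    rw [List.length_nil, Nat.add_zero, ← Nat.card_eq_of_bijective _ hbij,
      Nat.card_eq_fintype_card]
  | cons p l ih =>
    have h2 := card_quotient_merge (pairsSetoid l) p.1 p.2
    simp only [List.length_cons]
    have : pairsSetoid (p :: l) = mergeSetoid (pairsSetoid l) p.1 p.2 := rfl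
    rw [this]
    omega

lemma setoid_rel_zpow {s : Setoid α} {g : Equiv.Perm α} (hg : ∀ x, s.r (g x) x) :
    ∀ (i : ℤ) (x : α), s.r ((g ^ i) x) x := by
  have hn : ∀ (n : ℕ) (x : α), s.r ((g ^ n) x) x := by
    intro n
    induction n with
    | zero => intro x; simpa using s.refl x
    | succ n ih =>
      intro x
      rw [pow_succ, Equiv.Perm.mul_apply]
      exact s.trans (ih (g x)) (hg x)
  intro i x
  cases i with
  | ofNat n => simpa using hn n x
  | negSucc n =>
    rw [zpow_negSucc]
    have := hn (n + 1) ((g ^ (n + 1))⁻¹ x)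
    rw [show (g ^ (n + 1)) ((g ^ (n + 1))⁻¹ x) = x from Equiv.apply_symm_apply _ _] at this
    exact s.symm this

lemma pairsSetoid_prod (l : List (α × α)) :
    ∀ x, (pairsSetoid l).r (mulSwapProd l x) x := by
  induction l with
  | nil =>
    intro x
    show (mulSwapProd ([] : List (α × α))) x = x
    simp [mulSwapProd]
  | cons p l ih =>
    intro x
    have hm : mulSwapProd (p :: l) x = Equiv.swap p.1 p.2 (mulSwapProd l x) := by
      simp [mulSwapProd, Equiv.Perm.mul_apply]
    rw [hm]
    have h1 : (pairsSetoid (p :: l)).r (mulSwapProd l x) x := Or.inl (ih x)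
    have h2 : ∀ y : α, (pairsSetoid (p :: l)).r (Equiv.swap p.1 p.2 y) y := by
      intro y
      by_cases hya : y = p.1
      · rw [hya, Equiv.swap_apply_left]
        exact Or.inr ⟨Or.inr ((pairsSetoid l).refl _), Or.inl ((pairsSetoid l).refl _)⟩
      · by_cases hyb : y = p.2
        · rw [hyb, Equiv.swap_apply_right]
          exact Or.inr ⟨Or.inl ((pairsSetoid l).refl _), Or.inr ((pairsSetoid l).refl _)⟩
        · rw [Equiv.swap_apply_of_ne_of_ne hya hyb]
    exact (pairsSetoid (p :: l)).trans (h2 (mulSwapProd l x)) h1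

lemma card_le_of_fullCycle_rep {l : List (α × α)}
    (hc : (mulSwapProd l).IsCycle) (hs : (mulSwapProd l).support = Finset.univ) :
    Fintype.card α ≤ l.length + 1 := by
  set g := mulSwapProd l with hg
  have hall : ∀ x y : α, (pairsSetoid l).r x y := by
    obtain ⟨z, hz, hsame⟩ := id hc
    intro x y
    have hx : g x ≠ x := by
      have : x ∈ g.support := hs ▸ Finset.mem_univ x
      exact Equiv.Perm.mem_support.mp this
    have hy : g y ≠ y := by
      have : y ∈ g.support := hs ▸ Finset.mem_univ y
      exact Equiv.Perm.mem_support.mp this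
    have hxy : g.SameCycle x y := ((hsame hx).symm.trans (hsame hy))
    obtain ⟨i, hi⟩ := hxy
    have := setoid_rel_zpow (s := pairsSetoid l) (g := g) (pairsSetoid_prod l) i x
    rw [hi] at this
    exact (pairsSetoid l).symm this
  have hsub : Subsingleton (Quotient (pairsSetoid l)) := by
    constructor
    intro c1 c2
    induction c1 using Quotient.ind with | _ x =>
    induction c2 using Quotient.ind with | _ y =>
    exact Quotient.sound (hall x y)
  have h1 : Nat.card (Quotient (pairsSetoid l)) ≤ 1 := by
    have := Nat.card_le_card_of_injective (fun _ : Quotient (pairsSetoid l) => ())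
      (fun a b _ => Subsingleton.elim a b)
    simpa using this
  have h2 := card_quotient_pairsSetoid l
  omega

/-- the crossing predicate for a threshold `t` -/
def crossPred {V : Type*} (f : V → ℕ) (t : ℕ) : Sym2 V → Prop :=
  Sym2.lift ⟨fun u v => (f u ≤ t ∧ t < f v) ∨ (f v ≤ t ∧ t < f u),
    fun u v => propext or_comm⟩

lemma crossPred_mk {V : Type*} (f : V → ℕ) (t : ℕ) (u v : V) :
    crossPred f t s(u, v) ↔ ((f u ≤ t ∧ t < f v) ∨ (f v ≤ t ∧ t < f u)) :=
  Iff.rfl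

lemma exists_cross_edge {V : Type*} (G : SimpleGraph V) (f : V → ℕ) (t : ℕ) :
    ∀ {u v : V} (w : G.Walk u v), f u ≤ t → t < f v → ∃ e ∈ w.edges, crossPred f t e := by
  intro u v w
  induction w with
  | nil => intro h1 h2; omega
  | @cons u x v h p ih =>
    intro h1 h2
    by_cases hx : f x ≤ t
    · obtain ⟨e, he, hce⟩ := ih hx h2
      exact ⟨e, by simp [SimpleGraph.Walk.edges_cons, he], hce⟩
    · refine ⟨s(u, x), by simp [SimpleGraph.Walk.edges_cons], ?_⟩
      rw [crossPred_mk]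
      exact Or.inl ⟨h1, by omega⟩

end FaceAux

/-- for a finite connected graph with boundary regions `A`, `B`, a
minimum `A`–`B` edge cut `σ_min` of size `m`, and any labeling of the vertices by
permutations in `S_N` equal to `id` on the `A` boundary and to a fixed `N`-cycle
`F` on the `B` boundary, the face number
`Ω̃({π_v}) = ∑_{(u,v) ∈ E} χ(π_u⁻¹ π_v)` satisfies `Ω̃ ≤ N|E| − m(N − 1)`. -/
theorem faceNumber_le_of_minCut {V : Type*} [Fintype V] [DecidableEq V]
    (G : SimpleGraph V) [DecidableRel G.Adj] (hconn : G.Connected)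
    (A B : Set V) (hdisj : Disjoint A B) (hA : A.Nonempty) (hB : B.Nonempty)
    (N : ℕ) (F : Equiv.Perm (Fin N))
    (hF : F.IsCycle ∧ F.support = Finset.univ)
    (σmin : Finset (Sym2 V)) (hσ : IsMinEdgeCut G A B σmin)
    (π : V → Equiv.Perm (Fin N))
    (hbdA : ∀ v ∈ A, π v = 1) (hbdB : ∀ v ∈ B, π v = F) :
    ∑ e ∈ G.edgeFinset, numCyclesLift π e
      ≤ N * G.edgeFinset.card - σmin.card * (N - 1) := by
  classical
  set fV : V → ℕ := fun v => FaceAux.swapLen (π v) with hfV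
  -- basic facts about cycle types
  have hnum : ∀ g : Equiv.Perm (Fin N),
      Multiset.card g.cycleType ≤ g.cycleType.sum ∧ g.cycleType.sum ≤ N := fun g =>
    ⟨FaceAux.card_cycleType_le_sum g,
      by simpa [Fintype.card_fin] using FaceAux.sum_cycleType_le g⟩
  have hchi_le : ∀ g : Equiv.Perm (Fin N), numCycles g ≤ N := by
    intro g
    have := hnum g
    have hd : numCycles g = N - g.cycleType.sum + Multiset.card g.cycleType := rfl
    omega
  -- swapLen of F
  have hLF_le : FaceAux.swapLen F ≤ N - 1 := by
    have h1 := FaceAux.swapLen_le_c F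
    have hsum : F.cycleType.sum = N := by
      rw [Equiv.Perm.sum_cycleType, hF.2, Finset.card_univ, Fintype.card_fin]
    have hcard : Multiset.card F.cycleType = 1 :=
      Equiv.Perm.card_cycleType_eq_one.mpr hF.1
    omega
  have hLF_ge : N ≤ FaceAux.swapLen F + 1 := by
    obtain ⟨l, hl, hlen⟩ := FaceAux.swapRep_swapLen F
    have := FaceAux.card_le_of_fullCycle_rep (l := l)
      (by rw [hl]; exact hF.1) (by rw [hl]; exact hF.2)
    rw [Fintype.card_fin] at this
    omega
  -- per-edge bound
  have hedge : ∀ u v : V,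
      ((Finset.range (N - 1)).filter (fun t => FaceAux.crossPred fV t s(u, v))).card
        ≤ N - numCycles ((π u)⁻¹ * π v) := by
    intro u v
    set g := (π u)⁻¹ * π v with hg
    have h1 : fV v ≤ fV u + FaceAux.swapLen g := FaceAux.swapLen_triangle _ _
    have h2 : fV u ≤ fV v + FaceAux.swapLen g := by
      have ht := FaceAux.swapLen_triangle (π v) (π u)
      have hinv : FaceAux.swapLen ((π v)⁻¹ * π u) ≤ FaceAux.swapLen g := by
        have he : (π v)⁻¹ * π u = g⁻¹ := by rw [hg]; group
        rw [he]
        exact FaceAux.swapLen_inv g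
      simp only [hfV] at ht ⊢
      omega
    have h3 := FaceAux.swapLen_le_c g
    have h4 := hnum g
    have hsub : ((Finset.range (N - 1)).filter (fun t => FaceAux.crossPred fV t s(u, v)))
        ⊆ Finset.Ico (min (fV u) (fV v)) (max (fV u) (fV v)) := by
      intro t ht
      rw [Finset.mem_filter, Finset.mem_range] at ht
      have hc := ht.2
      rw [FaceAux.crossPred_mk] at hc
      rw [Finset.mem_Ico]
      rcases hc with ⟨ha, hb⟩ | ⟨ha, hb⟩ <;> omega
    have hcard : ((Finset.range (N - 1)).filter (fun t => FaceAux.crossPred fV t s(u, v))).card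
        ≤ max (fV u) (fV v) - min (fV u) (fV v) := by
      calc ((Finset.range (N - 1)).filter (fun t => FaceAux.crossPred fV t s(u, v))).card
          ≤ (Finset.Ico (min (fV u) (fV v)) (max (fV u) (fV v))).card :=
            Finset.card_le_card hsub
        _ = max (fV u) (fV v) - min (fV u) (fV v) := Nat.card_Ico _ _
    have hd : numCycles g = N - g.cycleType.sum + Multiset.card g.cycleType := rfl
    omega
  -- cut bound per threshold
  have hcut : ∀ t ∈ Finset.range (N - 1),
      σmin.card ≤ (G.edgeFinset.filter (fun e => FaceAux.crossPred fV t e)).card := by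
    intro t ht
    rw [Finset.mem_range] at ht
    apply hσ.2
    constructor
    · intro e he
      rw [Finset.mem_coe, Finset.mem_filter] at he
      exact SimpleGraph.mem_edgeFinset.mp he.1
    · intro a ha b hb w
      have hfa : fV a ≤ t := by
        have hpa : π a = 1 := hbdA a ha
        have : fV a = 0 := by
          simp only [hfV, hpa, FaceAux.swapLen_one]
        omega
      have hfb : t < fV b := by
        have hpb : π b = F := hbdB b hb
        have : fV b = FaceAux.swapLen F := by simp only [hfV, hpb]
        omega
      obtain ⟨e, he, hce⟩ := FaceAux.exists_cross_edge G fV t w hfa hfb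
      refine ⟨e, he, ?_⟩
      rw [Finset.mem_filter]
      exact ⟨SimpleGraph.mem_edgeFinset.mpr (w.edges_subset_edgeSet he), hce⟩
  -- per-edge bound in lifted form
  have hsum1 : ∀ e ∈ G.edgeFinset,
      ((Finset.range (N - 1)).filter (fun t => FaceAux.crossPred fV t e)).card
        ≤ N - numCyclesLift π e := by
    intro e _
    induction e using Sym2.ind with
    | _ u v => simpa [numCyclesLift] using hedge u v
  -- double counting
  have hdc : ∑ t ∈ Finset.range (N - 1),
        (G.edgeFinset.filter (fun e => FaceAux.crossPred fV t e)).card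
      = ∑ e ∈ G.edgeFinset,
        ((Finset.range (N - 1)).filter (fun t => FaceAux.crossPred fV t e)).card := by
    simp_rw [Finset.card_filter]
    exact Finset.sum_comm
  have hlow : σmin.card * (N - 1) ≤ ∑ e ∈ G.edgeFinset, (N - numCyclesLift π e) := by
    calc σmin.card * (N - 1) = ∑ _t ∈ Finset.range (N - 1), σmin.card := by
          rw [Finset.sum_const, Finset.card_range, smul_eq_mul, mul_comm]
      _ ≤ ∑ t ∈ Finset.range (N - 1),
            (G.edgeFinset.filter (fun e => FaceAux.crossPred fV t e)).card :=
          Finset.sum_le_sum hcut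
      _ = ∑ e ∈ G.edgeFinset,
            ((Finset.range (N - 1)).filter (fun t => FaceAux.crossPred fV t e)).card := hdc
      _ ≤ ∑ e ∈ G.edgeFinset, (N - numCyclesLift π e) := Finset.sum_le_sum hsum1
  have hchiLift : ∀ e : Sym2 V, numCyclesLift π e ≤ N := by
    intro e
    induction e using Sym2.ind with
    | _ u v => simpa [numCyclesLift] using hchi_le ((π u)⁻¹ * π v)
  have htot : ∑ e ∈ G.edgeFinset, numCyclesLift π e
      + ∑ e ∈ G.edgeFinset, (N - numCyclesLift π e) = N * G.edgeFinset.card := by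
    rw [← Finset.sum_add_distrib]
    rw [Finset.sum_congr rfl (fun e _ => (by have := hchiLift e; omega :
      numCyclesLift π e + (N - numCyclesLift π e) = N))]
    rw [Finset.sum_const, smul_eq_mul, mul_comm]
  omega
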